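/- arXiv:2204.04594 — 9 statements merged into one kernel-verified Lean document; each statement's English description precedes it below -/
import Mathlib

section
/- Let G and H be Polish groups. If there is a topological group embedding of G onto a closed subgroup of H (i.e., an injective continuous group homomorphism G → H with closed range which is a homeomorphism onto its image), then E(G) is Borel reducible to E(H). -/
open Filter Topology

/-- `E(G)`: the equivalence relation on `G^ω = ℕ → G` relating `x` and `y` iff
the sequence `n ↦ x n * (y n)⁻¹` converges in `G`. -/
def ERel (G : Type*) [Group G] [TopologicalSpace G] (x y : ℕ → G) : Prop :=
  ∃ g : G, Tendsto (fun n => x n * (y n)⁻¹) atTop (𝓝 g)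

/-- Borel reducibility of binary relations on topological spaces, with respect to
the Borel σ-algebras of the topologies. -/
def BorelReducible {X Y : Type*} [TopologicalSpace X] [TopologicalSpace Y]
    (E : X → X → Prop) (F : Y → Y → Prop) : Prop :=
  ∃ θ : X → Y, @Measurable X Y (borel X) (borel Y) θ ∧ ∀ x y, (E x y ↔ F (θ x) (θ y))

/-- If a Polish group `G` embeds as a topological group onto a closed subgroup of a
Polish group `H`, then `E(G) ≤_B E(H)`. -/
theorem stmt0 {G H : Type*} [Group G] [TopologicalSpace G] [IsTopologicalGroup G] [PolishSpace G]
    [Group H] [TopologicalSpace H] [IsTopologicalGroup H] [PolishSpace H]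
    (φ : G →* H) (hφ : Topology.IsClosedEmbedding φ) :
    BorelReducible (ERel G) (ERel H) := by
  refine ⟨fun x n => φ (x n), ?_, ?_⟩
  · exact (continuous_pi fun n => hφ.continuous.comp (continuous_apply n)).borel_measurable
  · intro x y
    constructor
    · rintro ⟨g, hg⟩
      refine ⟨φ g, ?_⟩
      have := (hφ.continuous.tendsto g).comp hg
      simpa [Function.comp_def, map_mul, map_inv] using this
    · rintro ⟨h, hh⟩
      have hh' : Tendsto (fun n => φ (x n * (y n)⁻¹)) atTop (𝓝 h) := by
        simpa [map_mul, map_inv] using hh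
      have hmem : h ∈ Set.range φ := by
        have : h ∈ closure (Set.range φ) :=
          mem_closure_of_tendsto hh' (Filter.Eventually.of_forall fun n => ⟨_, rfl⟩)
        rwa [hφ.isClosed_range.closure_eq] at this
      obtain ⟨g, rfl⟩ := hmem
      refine ⟨g, ?_⟩
      rw [hφ.isInducing.tendsto_nhds_iff]
      exact hh'
end

section
/- Let G be a countable discrete group containing at least two elements. Then E(G) is Borel bireducible with E_0, i.e., E(G) ≤_B E_0 and E_0 ≤_B E(G). -/
open Filter Topology

/-- The eventual-equality relation `E₀` on `2^ω`. -/
def E0 (x y : ℕ → Bool) : Prop := ∀ᶠ n in atTop, x n = y n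

/-- In a discrete space, convergence is eventual constancy. -/
lemma tendsto_discrete_iff {G : Type*} [TopologicalSpace G] [DiscreteTopology G]
    (u : ℕ → G) (g : G) : Tendsto u atTop (𝓝 g) ↔ ∀ᶠ n in atTop, u n = g := by
  rw [nhds_discrete, tendsto_pure]

lemma erel_iff {G : Type*} [Group G] [TopologicalSpace G] [DiscreteTopology G]
    (x y : ℕ → G) : ERel G x y ↔ ∃ g : G, ∃ N, ∀ n ≥ N, x n * (y n)⁻¹ = g := by
  unfold ERel
  simp only [tendsto_discrete_iff, eventually_atTop]

lemma nat_pair_le_pair_right (a : ℕ) {b c : ℕ} (h : b ≤ c) :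
    Nat.pair a b ≤ Nat.pair a c := by
  rcases lt_or_eq_of_le h with h | h
  · exact (Nat.pair_lt_pair_right a h).le
  · rw [h]

/-- For a countable discrete group `G` with at least two elements,
`E(G)` is Borel bireducible with `E₀`. -/
theorem stmt1 {G : Type*} [Group G] [TopologicalSpace G] [IsTopologicalGroup G]
    [Countable G] [DiscreteTopology G] [Nontrivial G] :
    BorelReducible (ERel G) E0 ∧ BorelReducible E0 (ERel G) := by
  constructor
  · -- E(G) ≤_B E₀
    obtain ⟨f, hf⟩ := exists_injective_nat G
    -- the "difference sequence"
    set ψ : (ℕ → G) → ℕ → G := fun x i => (x i)⁻¹ * x (i + 1) with hψ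
    refine ⟨fun x n => decide (f (ψ x n.unpair.1) = n.unpair.2), ?_, ?_⟩
    · apply Continuous.borel_measurable
      apply continuous_pi
      intro n
      have h1 : Continuous (fun x : ℕ → G => (x n.unpair.1, x (n.unpair.1 + 1))) :=
        (continuous_apply _).prodMk (continuous_apply _)
      have h2 : Continuous (fun p : G × G => decide (f (p.1⁻¹ * p.2) = n.unpair.2)) :=
        continuous_of_discreteTopology
      exact h2.comp h1
    · intro x y
      rw [erel_iff]
      constructor
      · rintro ⟨g, N, hN⟩
        -- difference sequences agree from N on
        have hψeq : ∀ i ≥ N, ψ x i = ψ y i := by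
          intro i hi
          have h1 : x i = g * y i := by
            have := hN i hi
            rwa [mul_inv_eq_iff_eq_mul] at this
          have h2 : x (i + 1) = g * y (i + 1) := by
            have := hN (i + 1) (le_trans hi (Nat.le_succ i))
            rwa [mul_inv_eq_iff_eq_mul] at this
          simp [hψ, h1, h2, mul_assoc]
        -- a bound beyond which the codes agree
        set M := ((Finset.range N).sup
          (fun i => Nat.pair i (max (f (ψ x i)) (f (ψ y i))))) + 1 with hM
        rw [E0, eventually_atTop]
        refine ⟨M, fun m hm => ?_⟩
        set i := m.unpair.1
        set j := m.unpair.2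
        by_cases hiN : N ≤ i
        · have e := hψeq i hiN
          simp only [i] at e ⊢
          simp [e]
        · push_neg at hiN
          have hj : max (f (ψ x i)) (f (ψ y i)) < j := by
            by_contra hcon
            push_neg at hcon
            have : m ≤ Nat.pair i (max (f (ψ x i)) (f (ψ y i))) := by
              calc m = Nat.pair i j := (Nat.pair_unpair m).symm
                _ ≤ _ := nat_pair_le_pair_right i hcon
            have hle : Nat.pair i (max (f (ψ x i)) (f (ψ y i))) ≤
                (Finset.range N).sup
                  (fun i => Nat.pair i (max (f (ψ x i)) (f (ψ y i)))) :=
              Finset.le_sup (f := fun i => Nat.pair i (max (f (ψ x i)) (f (ψ y i))))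
                (Finset.mem_range.2 hiN)
            omega
          have hx : f (ψ x i) ≠ j := by
            have := le_max_left (f (ψ x i)) (f (ψ y i)); omega
          have hy : f (ψ y i) ≠ j := by
            have := le_max_right (f (ψ x i)) (f (ψ y i)); omega
          simp only [i, j] at hx hy ⊢
          simp [hx, hy]
      · rintro hE0
        rw [E0, eventually_atTop] at hE0
        obtain ⟨M, hM⟩ := hE0
        -- difference sequences agree from M on
        have hψeq : ∀ i ≥ M, ψ x i = ψ y i := by
          intro i hi
          have hm : M ≤ Nat.pair i (f (ψ x i)) :=
            le_trans hi (Nat.left_le_pair i _)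
          have := hM (Nat.pair i (f (ψ x i))) hm
          simp only [Nat.unpair_pair, decide_eq_decide, eq_self_iff_true,
            true_iff] at this
          exact (hf this).symm
        -- hence x n * (y n)⁻¹ is eventually constant
        refine ⟨x M * (y M)⁻¹, M, ?_⟩
        intro n hn
        induction n, hn using Nat.le_induction with
        | base => rfl
        | succ n hn ih =>
          have h := hψeq n hn
          simp only [hψ] at h
          have := congrArg (fun t => x n * t * (y (n + 1))⁻¹) h
          simp only [mul_assoc, mul_inv_cancel_left, mul_inv_cancel,
            mul_one] at this
          rw [this]
          exact ih
  · -- E₀ ≤_B E(G)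
    obtain ⟨a, ha⟩ := exists_ne (1 : G)
    refine ⟨fun x n => if n % 2 = 0 then 1 else (if x (n / 2) then a else 1), ?_, ?_⟩
    · apply Continuous.borel_measurable
      apply continuous_pi
      intro n
      by_cases h : n % 2 = 0
      · simp only [h, if_pos]
        exact continuous_const
      · simp only [h, if_neg]
        exact (continuous_of_discreteTopology
          (f := fun b : Bool => if b then a else 1)).comp (continuous_apply (n / 2))
    · intro x y
      rw [erel_iff, E0, eventually_atTop]
      constructor
      · rintro ⟨N, hN⟩
        refine ⟨1, 2 * N, fun m hm => ?_⟩
        by_cases h : m % 2 = 0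
        · simp [h]
        · have hdiv : N ≤ m / 2 := by omega
          have := hN (m / 2) hdiv
          simp [h, this]
      · rintro ⟨g, N, hN⟩
        -- evaluate at an even index to see g = 1
        have hg : g = 1 := by
          have := hN (2 * N) (by omega)
          simpa using this.symm
        subst hg
        refine ⟨N, fun k hk => ?_⟩
        have hodd : (2 * k + 1) % 2 ≠ 0 := by omega
        have := hN (2 * k + 1) (by omega)
        have hdiv : (2 * k + 1) / 2 = k := by omega
        simp only [hodd, if_neg, hdiv, if_false] at this
        rcases Bool.eq_false_or_eq_true (x k) with hx | hx <;>
          rcases Bool.eq_false_or_eq_true (y k) with hy | hy <;>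
          simp [hx, hy] at this ⊢ <;> exact absurd this ha
end

section
/- Let G be an uncountable Polish group. Then E_0^ω is Borel reducible to E(G). -/
open Filter Topology

/-- The countable power `E₀^ω` on `(2^ω)^ω`. -/
def E0omega (x y : ℕ → ℕ → Bool) : Prop := ∀ k, E0 (x k) (y k)

/-- In an uncountable Polish group, there is a sequence of non-identity elements
converging to the identity. -/
lemma exists_good_seq {G : Type*} [Group G] [TopologicalSpace G] [IsTopologicalGroup G]
    [PolishSpace G] [Uncountable G] :
    ∃ a : ℕ → G, (∀ n, a n ≠ 1) ∧ Tendsto a atTop (𝓝 (1 : G)) := by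
  -- first, `1` is not isolated
  have hne : (𝓝[≠] (1 : G)).NeBot := by
    by_contra h
    rw [Filter.not_neBot, ← Filter.empty_mem_iff_bot, mem_nhdsWithin] at h
    obtain ⟨U, hUo, hU1, hUsub⟩ := h
    have hUsing : U ⊆ {1} := by
      intro u hu
      by_contra hu1
      exact absurd (hUsub ⟨hu, hu1⟩) (Set.notMem_empty u)
    have hsing : IsOpen ({1} : Set G) := by
      have : U = {1} := le_antisymm hUsing (by simpa using hU1)
      rwa [this] at hUo
    have hdisc : DiscreteTopology G := by
      rw [discreteTopology_iff_isOpen_singleton]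
      intro g
      have := (isOpenMap_mul_left g) _ hsing
      simpa using this
    obtain ⟨s, hsc, hsd⟩ := TopologicalSpace.exists_countable_dense G
    have : s = Set.univ := by
      have h' := hsd.closure_eq
      rwa [IsClosed.closure_eq (@isClosed_discrete _ _ hdisc s)] at h'
    rw [this, Set.countable_univ_iff] at hsc
    exact not_countable hsc
  obtain ⟨u, hu⟩ := Filter.exists_seq_tendsto (𝓝[≠] (1 : G))
  have hmem : ∀ᶠ n in atTop, u n ∈ ({1}ᶜ : Set G) :=
    hu.eventually_mem self_mem_nhdsWithin
  obtain ⟨N, hN⟩ := eventually_atTop.1 hmem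
  refine ⟨fun n => u (n + N), fun n => ?_, ?_⟩
  · exact hN _ (Nat.le_add_left _ _)
  · exact (hu.mono_right nhdsWithin_le_nhds).comp (tendsto_add_atTop_nat N)

theorem tendsto_pair_left (k : ℕ) : Tendsto (fun n => Nat.pair k n) atTop atTop :=
  tendsto_atTop_mono (fun n => Nat.right_le_pair k n) tendsto_id

lemma bool_key {G : Type*} [Group G] (b c : Bool) (g : G) :
    (if b then g else 1) * (if c then g else 1)⁻¹ =
      if b = c then 1 else if b then g else g⁻¹ := by
  cases b <;> cases c <;> simp

/-- For an uncountable Polish group `G`, `E₀^ω ≤_B E(G)`. -/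
theorem stmt2 {G : Type*} [Group G] [TopologicalSpace G] [IsTopologicalGroup G] [PolishSpace G]
    [Uncountable G] :
    BorelReducible E0omega (ERel G) := by
  obtain ⟨a, ha1, haT⟩ := exists_good_seq (G := G)
  have haTinv : Tendsto (fun k => (a k)⁻¹) atTop (𝓝 (1 : G)) := by
    simpa using haT.inv
  set θ : (ℕ → ℕ → Bool) → (ℕ → G) :=
    fun x m => if x (Nat.unpair m).1 (Nat.unpair m).2 then a (Nat.unpair m).1 else 1 with hθ
  have key : ∀ (x y : ℕ → ℕ → Bool) (m : ℕ),
      θ x m * (θ y m)⁻¹ =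
        if x (Nat.unpair m).1 (Nat.unpair m).2 = y (Nat.unpair m).1 (Nat.unpair m).2 then 1
        else if x (Nat.unpair m).1 (Nat.unpair m).2 then a (Nat.unpair m).1
        else (a (Nat.unpair m).1)⁻¹ :=
    fun x y m => bool_key _ _ _
  refine ⟨θ, ?_, ?_⟩
  · -- measurability: θ is continuous
    refine Continuous.borel_measurable ?_
    refine continuous_pi fun m => ?_
    exact (continuous_of_discreteTopology
        (f := fun b : Bool => if b then a (Nat.unpair m).1 else (1 : G))).comp
      ((continuous_apply (Nat.unpair m).2).comp (continuous_apply (Nat.unpair m).1))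
  · intro x y
    constructor
    · -- E0omega → converges to 1
      intro hE
      refine ⟨1, ?_⟩
      rw [Filter.tendsto_def]
      intro U hU
      have h1U : (1 : G) ∈ U := mem_of_mem_nhds hU
      obtain ⟨K, hK⟩ := eventually_atTop.1
        ((haT.eventually_mem hU).and (haTinv.eventually_mem hU))
      have hEk : ∀ k, ∃ N, ∀ n ≥ N, x k n = y k n := fun k => eventually_atTop.1 (hE k)
      choose N hN using hEk
      -- the bad set is finite
      have hBfin : {m : ℕ | (Nat.unpair m).1 < K ∧ (Nat.unpair m).2 < N (Nat.unpair m).1}.Finite := by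
        have hS : {p : ℕ × ℕ | p.1 < K ∧ p.2 < N p.1}.Finite := by
          apply Set.Finite.subset
            ((Set.finite_Iio K).prod (Set.finite_Iio ((Finset.range K).sup N + 1)))
          rintro ⟨k, n⟩ ⟨hk, hn⟩
          refine ⟨hk, lt_of_lt_of_le hn ?_⟩
          exact le_trans (Finset.le_sup (Finset.mem_range.2 hk)) (Nat.le_succ _)
        have hinj : Function.Injective Nat.unpair :=
          Function.LeftInverse.injective (g := fun p : ℕ × ℕ => Nat.pair p.1 p.2)
            (fun m => Nat.pair_unpair m)
        exact (hS.preimage hinj.injOn)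
      have hgood : ∀ᶠ m in atTop,
          ¬((Nat.unpair m).1 < K ∧ (Nat.unpair m).2 < N (Nat.unpair m).1) := by
        rw [← Nat.cofinite_eq_atTop]
        exact hBfin.eventually_cofinite_notMem
      filter_upwards [hgood] with m hm
      rw [Set.mem_preimage, key]
      set k := (Nat.unpair m).1 with hk
      set n := (Nat.unpair m).2 with hn
      by_cases hkK : K ≤ k
      · obtain ⟨h1, h2⟩ := hK k hkK
        rcases Bool.dichotomy (x k n) with hx | hx <;>
          rcases Bool.dichotomy (y k n) with hy | hy <;>
          simp [hx, hy, h1U, h1, h2]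
      · push_neg at hkK
        have hnN : N k ≤ n := by
          by_contra h
          exact hm ⟨hkK, by omega⟩
        simp [hN k n hnN, h1U]
    · -- converges → E0omega
      rintro ⟨g, hg⟩
      -- first, g = 1
      have hsub : Tendsto (fun m => θ x (Nat.pair m 0) * (θ y (Nat.pair m 0))⁻¹)
          atTop (𝓝 g) :=
        hg.comp (tendsto_atTop_mono (fun m => Nat.left_le_pair m 0) tendsto_id)
      have hsub1 : Tendsto (fun m => θ x (Nat.pair m 0) * (θ y (Nat.pair m 0))⁻¹)
          atTop (𝓝 (1 : G)) := by
        rw [Filter.tendsto_def]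
        intro U hU
        have h1U : (1 : G) ∈ U := mem_of_mem_nhds hU
        filter_upwards [(haT.eventually_mem hU).and (haTinv.eventually_mem hU)] with m hm
        rw [Set.mem_preimage, key, Nat.unpair_pair]
        rcases Bool.dichotomy (x m 0) with hx | hx <;>
          rcases Bool.dichotomy (y m 0) with hy | hy <;>
          simp [hx, hy, h1U, hm.1, hm.2]
      have hg1 : g = 1 := tendsto_nhds_unique hsub hsub1
      subst hg1
      intro k
      by_contra hk
      have hfreq : ∃ᶠ n in atTop, x k n ≠ y k n := Filter.not_eventually.1 hk
      have hto : Tendsto (fun n => θ x (Nat.pair k n) * (θ y (Nat.pair k n))⁻¹)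
          atTop (𝓝 (1 : G)) := hg.comp (tendsto_pair_left k)
      have hC : IsClosed ({a k, (a k)⁻¹} : Set G) :=
        ((Set.finite_singleton _).insert _).isClosed
      have h1notC : (1 : G) ∉ ({a k, (a k)⁻¹} : Set G) := by
        simp only [Set.mem_insert_iff, Set.mem_singleton_iff]
        push_neg
        exact ⟨(ha1 k).symm, fun h => ha1 k (by simpa using h.symm)⟩
      have hev : ∀ᶠ n in atTop,
          θ x (Nat.pair k n) * (θ y (Nat.pair k n))⁻¹ ∈ ({a k, (a k)⁻¹} : Set G)ᶜ :=
        hto.eventually_mem (hC.isOpen_compl.mem_nhds h1notC)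
      have hfreq2 : ∃ᶠ n in atTop,
          θ x (Nat.pair k n) * (θ y (Nat.pair k n))⁻¹ ∈ ({a k, (a k)⁻¹} : Set G) := by
        refine hfreq.mono fun n hn => ?_
        rw [key, Nat.unpair_pair]
        rcases Bool.dichotomy (x k n) with hx | hx <;>
          rcases Bool.dichotomy (y k n) with hy | hy
        · simp [hx, hy] at hn
        · simp [hx, hy]
        · simp [hx, hy]
        · simp [hx, hy] at hn
      obtain ⟨n, hn1, hn2⟩ := (hfreq2.and_eventually hev).exists
      exact hn2 hn1
end

section
/- Let G be a non-archimedean Polish group. Then E(G) is Borel reducible to =⁺. -/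
open Filter Topology

/-- A topological group is non-archimedean if every neighborhood of the identity
contains an open subgroup. -/
def NonArchGroup (G : Type*) [Group G] [TopologicalSpace G] : Prop :=
  ∀ U ∈ 𝓝 (1 : G), ∃ V : Subgroup G, IsOpen (V : Set G) ∧ (V : Set G) ⊆ U

/-- The relation `=⁺` on `(ℕ^ℕ)^ω`: two sequences are related iff they enumerate
the same set. -/
def EqPlus (x y : ℕ → ℕ → ℕ) : Prop := Set.range x = Set.range y

section Aux
variable {G : Type*} [Group G] [TopologicalSpace G] [IsTopologicalGroup G]

/-- code of the right coset `V m * g` : least `i` with `d i ∈ V m * g`. -/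
noncomputable def cc (V : ℕ → Subgroup G) (d : ℕ → G) (m : ℕ) (g : G) : ℕ :=
  sInf {i | d i * g⁻¹ ∈ V m}

variable {V : ℕ → Subgroup G} {d : ℕ → G}

lemma cc_exists (hVo : ∀ m, IsOpen ((V m : Set G))) (hd : DenseRange d) (m : ℕ) (g : G) :
    {i | d i * g⁻¹ ∈ V m}.Nonempty := by
  have hopen : IsOpen ((fun h : G => h * g⁻¹) ⁻¹' (V m : Set G)) :=
    (hVo m).preimage (continuous_id.mul continuous_const)
  have hne : ((fun h : G => h * g⁻¹) ⁻¹' (V m : Set G)).Nonempty :=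
    ⟨g, by simp [Set.mem_preimage, (V m).one_mem]⟩
  exact hd.exists_mem_open hopen hne

lemma cc_spec (hVo : ∀ m, IsOpen ((V m : Set G))) (hd : DenseRange d) (m : ℕ) (g : G) :
    d (cc V d m g) * g⁻¹ ∈ V m :=
  Nat.sInf_mem (cc_exists hVo hd m g)

lemma cc_eq_iff (hVo : ∀ m, IsOpen ((V m : Set G))) (hd : DenseRange d) (m : ℕ) (g h : G) :
    cc V d m g = cc V d m h ↔ g * h⁻¹ ∈ V m := by
  constructor
  · intro he
    have h1 := cc_spec hVo hd m g
    have h2 := cc_spec hVo hd m h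
    rw [he] at h1
    have := (V m).mul_mem ((V m).inv_mem h1) h2
    simpa [mul_assoc] using this
  · intro hgh
    have hset : {i | d i * g⁻¹ ∈ V m} = {i | d i * h⁻¹ ∈ V m} := by
      ext i
      constructor
      · intro hi
        have := (V m).mul_mem hi hgh
        simpa [mul_assoc] using this
      · intro hi
        have := (V m).mul_mem hi ((V m).inv_mem hgh)
        simpa [mul_assoc] using this
    rw [cc, cc, hset]

lemma cc_trans (hVo : ∀ m, IsOpen ((V m : Set G))) (hd : DenseRange d) (m : ℕ) (g a : G) :
    cc V d m (d (cc V d m g) * a) = cc V d m (g * a) := by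
  rw [cc_eq_iff hVo hd]
  have := cc_spec hVo hd m g
  simpa [mul_assoc] using this

lemma cc_continuous (hVo : ∀ m, IsOpen ((V m : Set G))) (hd : DenseRange d) (m : ℕ) :
    Continuous (cc V d m) := by
  have hset : ∀ j : ℕ, IsOpen {g : G | d j * g⁻¹ ∈ V m} ∧ IsClosed {g : G | d j * g⁻¹ ∈ V m} := by
    intro j
    have hco : Continuous (fun g : G => d j * g⁻¹) := continuous_const.mul continuous_inv
    exact ⟨(hVo m).preimage hco, ((V m).isClosed_of_isOpen (hVo m)).preimage hco⟩
  apply IsLocallyConstant.continuous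
  rw [IsLocallyConstant.iff_isOpen_fiber]
  intro i
  have : (cc V d m) ⁻¹' {i} =
      {g : G | d i * g⁻¹ ∈ V m} ∩ ⋂ j ∈ Finset.range i, {g : G | d j * g⁻¹ ∈ V m}ᶜ := by
    ext g
    simp only [Set.mem_preimage, Set.mem_singleton_iff, Set.mem_inter_iff, Set.mem_iInter,
      Set.mem_compl_iff, Set.mem_setOf_eq, Finset.mem_range]
    constructor
    · intro he
      refine ⟨he ▸ cc_spec hVo hd m g, fun j hj hjmem => ?_⟩
      have h2 : cc V d m g ≤ j := Nat.sInf_le hjmem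
      omega
    · rintro ⟨hi, hlt⟩
      have h1 : cc V d m g ≤ i := Nat.sInf_le hi
      rcases lt_or_eq_of_le h1 with h | h
      · exact absurd (cc_spec hVo hd m g) (hlt _ h)
      · exact h
  rw [this]
  exact ((hset i).1).inter (isOpen_biInter_finset fun j _ => (hset j).2.isOpen_compl)

/-- neighborhoods of `g` contain a right-coset neighborhood. -/
lemma coset_nhds (hVb : ∀ U ∈ 𝓝 (1 : G), ∃ m, ((V m : Set G)) ⊆ U) (g : G) {U : Set G}
    (hU : U ∈ 𝓝 g) : ∃ m, ∀ h : G, h * g⁻¹ ∈ V m → h ∈ U := by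
  have hc : Continuous (fun w : G => w * g) := continuous_id.mul continuous_const
  have : (fun w : G => w * g) ⁻¹' U ∈ 𝓝 (1 : G) := by
    apply hc.continuousAt.preimage_mem_nhds
    simpa using hU
  obtain ⟨m, hm⟩ := hVb _ this
  refine ⟨m, fun h hh => ?_⟩
  have := hm hh
  simpa using this

lemma conj_sub (hVb : ∀ U ∈ 𝓝 (1 : G), ∃ m, ((V m : Set G)) ⊆ U) (m : ℕ) (a : G)
    (hVo : ∀ m, IsOpen ((V m : Set G))) :
    ∃ m', ∀ v ∈ (V m' : Set G), a * v * a⁻¹ ∈ (V m : Set G) := by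
  have hc : Continuous (fun v : G => a * v * a⁻¹) :=
    (continuous_const.mul continuous_id).mul continuous_const
  have hmem : (fun v : G => a * v * a⁻¹) ⁻¹' (V m : Set G) ∈ 𝓝 (1 : G) := by
    apply hc.continuousAt.preimage_mem_nhds
    simpa using (hVo m).mem_nhds (V m).one_mem
  obtain ⟨m', hm'⟩ := hVb _ hmem
  exact ⟨m', fun v hv => hm' hv⟩

lemma raikov [PolishSpace G] (hVo : ∀ m, IsOpen ((V m : Set G)))
    (hVb : ∀ U ∈ 𝓝 (1 : G), ∃ m, ((V m : Set G)) ⊆ U)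
    (hd : DenseRange d) (z : ℕ → G)
    (hR : ∀ m, ∃ N, ∀ n ≥ N, ∀ n' ≥ N, z n * (z n')⁻¹ ∈ V m)
    (hL : ∀ m, ∃ N, ∀ n ≥ N, ∀ n' ≥ N, (z n)⁻¹ * z n' ∈ V m) :
    ∃ g : G, Tendsto z atTop (𝓝 g) := by
  classical
  letI := TopologicalSpace.upgradeIsCompletelyMetrizable G
  let ι : G → (ℕ → ℕ) := fun g m => cc V d m g
  have hιcont : Continuous ι := continuous_pi fun m => cc_continuous hVo hd m
  have hconstR : ∀ m t, ∃ r N, ∀ n ≥ N, cc V d m (d t * z n) = r := by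
    intro m t
    obtain ⟨m', hm'⟩ := conj_sub hVb m (d t) hVo
    obtain ⟨N, hN⟩ := hR m'
    refine ⟨cc V d m (d t * z N), N, fun n hn => ?_⟩
    rw [cc_eq_iff hVo hd]
    have h2 := hm' _ (hN n hn N le_rfl)
    have heq : (d t * z n) * (d t * z N)⁻¹ = d t * (z n * (z N)⁻¹) * (d t)⁻¹ := by group
    rw [heq]; exact h2
  have hconstL : ∀ m t, ∃ r N, ∀ n ≥ N, cc V d m (d t * (z n)⁻¹) = r := by
    intro m t
    obtain ⟨m', hm'⟩ := conj_sub hVb m (d t) hVo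
    obtain ⟨N, hN⟩ := hL m'
    refine ⟨cc V d m (d t * (z N)⁻¹), N, fun n hn => ?_⟩
    rw [cc_eq_iff hVo hd]
    have h2 := hm' _ (hN n hn N le_rfl)
    have heq : (d t * (z n)⁻¹) * (d t * (z N)⁻¹)⁻¹ = d t * ((z n)⁻¹ * z N) * (d t)⁻¹ := by group
    rw [heq]; exact h2
  choose Rr RN hRv using hconstR
  choose Lr LN hLv using hconstL
  let Rf : (ℕ → ℕ) → (ℕ → ℕ) := fun η m => Rr m (η m)
  let Lf : (ℕ → ℕ) → (ℕ → ℕ) := fun η m => Lr m (η m)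
  have hRcont : Continuous Rf := continuous_pi fun m =>
    Continuous.comp (continuous_of_discreteTopology (f := Rr m)) (continuous_apply m)
  have hLcont : Continuous Lf := continuous_pi fun m =>
    Continuous.comp (continuous_of_discreteTopology (f := Lr m)) (continuous_apply m)
  have hcyl : ∀ (j c : ℕ), IsOpen {η : ℕ → ℕ | η j = c} := by
    intro j c
    exact (continuous_apply (A := fun _ : ℕ => ℕ) j).isOpen_preimage ({c} : Set ℕ)
      (isOpen_discrete _)
  have I1 : ∀ (u : G) m, ∀ n ≥ RN m (cc V d m u), cc V d m (u * z n) = Rf (ι u) m := by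
    intro u m n hn
    have h := hRv m (cc V d m u) n hn
    rw [cc_trans hVo hd] at h
    exact h
  have I1' : ∀ (u : G) m, ∀ n ≥ LN m (cc V d m u), cc V d m (u * (z n)⁻¹) = Lf (ι u) m := by
    intro u m n hn
    have h := hLv m (cc V d m u) n hn
    rw [cc_trans hVo hd] at h
    exact h
  have I2 : ∀ u : G, Lf (Rf (ι u)) = ι u := by
    intro u
    funext m
    show Lr m (Rf (ι u) m) = cc V d m u
    have h1 : cc V d m (u * z (max (RN m (cc V d m u)) (LN m (Rf (ι u) m)))) = Rf (ι u) m :=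
      I1 u m _ (le_max_left _ _)
    have h2 : cc V d m (d (Rf (ι u) m) * (z (max (RN m (cc V d m u)) (LN m (Rf (ι u) m))))⁻¹)
        = Lr m (Rf (ι u) m) := hLv m _ _ (le_max_right _ _)
    have h3 := cc_spec hVo hd m (u * z (max (RN m (cc V d m u)) (LN m (Rf (ι u) m))))
    rw [h1] at h3
    rw [← h2, cc_eq_iff hVo hd]
    have heq : (d (Rf (ι u) m) * (z (max (RN m (cc V d m u)) (LN m (Rf (ι u) m))))⁻¹) * u⁻¹
        = d (Rf (ι u) m) * (u * z (max (RN m (cc V d m u)) (LN m (Rf (ι u) m))))⁻¹ := by group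
    rw [heq]; exact h3
  have I3 : ∀ u : G, Rf (Lf (ι u)) = ι u := by
    intro u
    funext m
    show Rr m (Lf (ι u) m) = cc V d m u
    have h1 : cc V d m (u * (z (max (LN m (cc V d m u)) (RN m (Lf (ι u) m))))⁻¹) = Lf (ι u) m :=
      I1' u m _ (le_max_left _ _)
    have h2 : cc V d m (d (Lf (ι u) m) * z (max (LN m (cc V d m u)) (RN m (Lf (ι u) m))))
        = Rr m (Lf (ι u) m) := hRv m _ _ (le_max_right _ _)
    have h3 := cc_spec hVo hd m (u * (z (max (LN m (cc V d m u)) (RN m (Lf (ι u) m))))⁻¹)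
    rw [h1] at h3
    rw [← h2, cc_eq_iff hVo hd]
    have heq : (d (Lf (ι u) m) * z (max (LN m (cc V d m u)) (RN m (Lf (ι u) m)))) * u⁻¹
        = d (Lf (ι u) m) * (u * (z (max (LN m (cc V d m u)) (RN m (Lf (ι u) m))))⁻¹)⁻¹ := by
      group
    rw [heq]; exact h3
  -- the completion-like space
  let K : Set (ℕ → ℕ) := closure (Set.range ι)
  have memK : ∀ u : G, ι u ∈ K := fun u => subset_closure ⟨u, rfl⟩
  have hRK : ∀ u : G, Rf (ι u) ∈ K := by
    intro u
    have htd : Tendsto (fun n => ι (u * z n)) atTop (𝓝 (Rf (ι u))) := by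
      rw [tendsto_pi_nhds]
      intro m
      apply Tendsto.congr' _ (tendsto_const_nhds (α := ℕ) (x := Rf (ι u) m))
      filter_upwards [eventually_ge_atTop (RN m (cc V d m u))] with n hn
      exact (I1 u m n hn).symm
    exact mem_closure_of_tendsto htd (Eventually.of_forall fun n => ⟨u * z n, rfl⟩)
  have hLK : ∀ u : G, Lf (ι u) ∈ K := by
    intro u
    have htd : Tendsto (fun n => ι (u * (z n)⁻¹)) atTop (𝓝 (Lf (ι u))) := by
      rw [tendsto_pi_nhds]
      intro m
      apply Tendsto.congr' _ (tendsto_const_nhds (α := ℕ) (x := Lf (ι u) m))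
      filter_upwards [eventually_ge_atTop (LN m (cc V d m u))] with n hn
      exact (I1' u m n hn).symm
    exact mem_closure_of_tendsto htd (Eventually.of_forall fun n => ⟨u * (z n)⁻¹, rfl⟩)
  have hRmaps : Set.MapsTo Rf K K := by
    intro p hp
    have h1 : Rf '' Set.range ι ⊆ K := by
      rintro _ ⟨_, ⟨u, rfl⟩, rfl⟩
      exact hRK u
    have h2 := image_closure_subset_closure_image (s := Set.range ι) hRcont
    have h3 : Rf p ∈ closure (Rf '' Set.range ι) := h2 ⟨p, hp, rfl⟩
    exact (closure_minimal h1 isClosed_closure) h3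
  have hLmaps : Set.MapsTo Lf K K := by
    intro p hp
    have h1 : Lf '' Set.range ι ⊆ K := by
      rintro _ ⟨_, ⟨u, rfl⟩, rfl⟩
      exact hLK u
    have h2 := image_closure_subset_closure_image (s := Set.range ι) hLcont
    have h3 : Lf p ∈ closure (Lf '' Set.range ι) := h2 ⟨p, hp, rfl⟩
    exact (closure_minimal h1 isClosed_closure) h3
  have hLR : Set.EqOn (Lf ∘ Rf) id K := by
    apply Set.EqOn.closure (s := Set.range ι) ?_ (hLcont.comp hRcont) continuous_id
    rintro _ ⟨u, rfl⟩
    exact I2 u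
  have hRL : Set.EqOn (Rf ∘ Lf) id K := by
    apply Set.EqOn.closure (s := Set.range ι) ?_ (hRcont.comp hLcont) continuous_id
    rintro _ ⟨u, rfl⟩
    exact I3 u
  haveI : PolishSpace K := isClosed_closure.polishSpace
  haveI : Nonempty K := ⟨⟨ι 1, memK 1⟩⟩
  haveI : CompleteSpace ↥K := isClosed_closure.completeSpace_coe
  haveI : (uniformity ↥K).IsCountablyGenerated := by
    rw [uniformity_setCoe]
    exact Filter.comap.isCountablyGenerated _ _
  haveI : BaireSpace ↥K := BaireSpace.of_completelyPseudoMetrizable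
  let eK : K ≃ₜ K :=
    { toFun := fun p => ⟨Rf p, hRmaps p.2⟩
      invFun := fun p => ⟨Lf p, hLmaps p.2⟩
      left_inv := fun p => Subtype.ext (hLR p.2)
      right_inv := fun p => Subtype.ext (hRL p.2)
      continuous_toFun := (hRcont.comp continuous_subtype_val).subtype_mk _
      continuous_invFun := (hLcont.comp continuous_subtype_val).subtype_mk _ }
  let A : ℕ → Set K := fun k => {p | ∃ U : Set (ℕ → ℕ), IsOpen U ∧ (p : ℕ → ℕ) ∈ U ∧
      ∀ g h : G, ι g ∈ U → ι h ∈ U → dist g h ≤ (1/2 : ℝ)^k}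
  have openA : ∀ k, IsOpen (A k) := by
    intro k
    rw [isOpen_iff_mem_nhds]
    rintro p ⟨U, hUo, hpU, hUc⟩
    have : (Subtype.val ⁻¹' U : Set K) ∈ 𝓝 p :=
      continuous_subtype_val.continuousAt.preimage_mem_nhds (hUo.mem_nhds hpU)
    exact mem_of_superset this (fun q hq => ⟨U, hUo, hq, hUc⟩)
  have hdenseS0 : Dense {p : K | (p : ℕ → ℕ) ∈ Set.range ι} := by
    intro p
    rw [mem_closure_iff]
    intro o ho hpo
    obtain ⟨U, hUo, hUeq⟩ := isOpen_induced_iff.mp ho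
    have hp : (p : ℕ → ℕ) ∈ U := by rw [← hUeq] at hpo; exact hpo
    obtain ⟨w, hwU, u, rfl⟩ := mem_closure_iff.mp p.2 U hUo hp
    exact ⟨⟨ι u, memK u⟩, by rw [← hUeq]; exact hwU, ⟨u, rfl⟩⟩
  have hsubA : ∀ k, {p : K | (p : ℕ → ℕ) ∈ Set.range ι} ⊆ A k := by
    intro k p hp
    obtain ⟨u, hu⟩ := hp
    have hball : Metric.ball u ((1/2 : ℝ)^k / 2) ∈ 𝓝 u :=
      Metric.ball_mem_nhds u (by positivity)
    obtain ⟨m, hm⟩ := coset_nhds hVb u hball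
    refine ⟨{η : ℕ → ℕ | η m = cc V d m u}, ?_, ?_, ?_⟩
    · exact hcyl m (cc V d m u)
    · rw [← hu]; exact rfl
    · intro g h hg hh
      have hgb : g ∈ Metric.ball u ((1/2 : ℝ)^k / 2) :=
        hm g ((cc_eq_iff hVo hd m g u).mp hg)
      have hhb : h ∈ Metric.ball u ((1/2 : ℝ)^k / 2) :=
        hm h ((cc_eq_iff hVo hd m h u).mp hh)
      rw [Metric.mem_ball] at hgb hhb
      have := dist_triangle g u h
      rw [dist_comm u h] at this
      linarith
  have denseA : ∀ k, Dense (A k) := fun k => hdenseS0.mono (hsubA k)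
  have denseB : ∀ k, Dense (eK ⁻¹' A k) := by
    intro k
    rw [dense_iff_closure_eq, ← Homeomorph.preimage_closure, (denseA k).closure_eq,
      Set.preimage_univ]
  have hBaire : Dense (⋂ k, (A k ∩ eK ⁻¹' A k)) := by
    apply dense_iInter_of_isOpen
    · exact fun k => (openA k).inter (eK.continuous.isOpen_preimage _ (openA k))
    · exact fun k => ((denseA k).inter_of_isOpen_left (denseB k) (openA k))
  obtain ⟨p, hp⟩ := hBaire.nonempty
  simp only [Set.mem_iInter, Set.mem_inter_iff] at hp
  have key : ∀ q : K, (∀ k, q ∈ A k) → ∃ u : G, (q : ℕ → ℕ) = ι u := by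
    intro q hq
    choose U hUo hqU hUc using hq
    let W : ℕ → Set (ℕ → ℕ) := fun k =>
      (⋂ j ∈ Finset.range (k+1), U j) ∩ (⋂ j ∈ Finset.range (k+1), {η | η j = (q : ℕ → ℕ) j})
    have hWo : ∀ k, IsOpen (W k) := fun k =>
      (isOpen_biInter_finset fun j _ => hUo j).inter
        (isOpen_biInter_finset fun j _ => hcyl j _)
    have hqW : ∀ k, (q : ℕ → ℕ) ∈ W k := by
      intro k
      constructor
      · simp only [Set.mem_iInter]
        intro j _
        exact hqU j
      · simp only [Set.mem_iInter, Set.mem_setOf_eq]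
        intros
        trivial
    have hpick : ∀ k, ∃ u : G, ι u ∈ W k := by
      intro k
      obtain ⟨w, hw, u, rfl⟩ := mem_closure_iff.mp q.2 (W k) (hWo k) (hqW k)
      exact ⟨u, hw⟩
    choose u hu using hpick
    have hUmem : ∀ j k, j ≤ k → ι (u k) ∈ U j := by
      intro j k hjk
      have := (hu k).1
      simp only [Set.mem_iInter] at this
      exact this j (Finset.mem_range.mpr (by omega))
    have hcau : CauchySeq u := by
      apply cauchySeq_of_le_geometric (1/2 : ℝ) 1 (by norm_num)
      intro n
      have h1 : ι (u n) ∈ U n := hUmem n n le_rfl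
      have h2 : ι (u (n+1)) ∈ U n := hUmem n (n+1) (by omega)
      have := hUc n (u n) (u (n+1)) h1 h2
      calc dist (u n) (u (n+1)) ≤ (1/2 : ℝ)^n := this
        _ = 1 * (1/2 : ℝ)^n := (one_mul _).symm
    obtain ⟨v, hv⟩ := cauchySeq_tendsto_of_complete hcau
    have hιv : Tendsto (fun k => ι (u k)) atTop (𝓝 (ι v)) :=
      ((hιcont.tendsto v).comp hv)
    have hιq : Tendsto (fun k => ι (u k)) atTop (𝓝 (q : ℕ → ℕ)) := by
      rw [tendsto_pi_nhds]
      intro j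
      apply Tendsto.congr' _ (tendsto_const_nhds (α := ℕ) (x := (q : ℕ → ℕ) j))
      filter_upwards [eventually_ge_atTop j] with k hk
      have := (hu k).2
      simp only [Set.mem_iInter, Set.mem_setOf_eq] at this
      exact (this j (Finset.mem_range.mpr (by omega))).symm
    exact ⟨v, tendsto_nhds_unique hιq hιv⟩
  obtain ⟨uu, huu⟩ := key p (fun k => (hp k).1)
  obtain ⟨vv, hvv⟩ := key (eK p) (fun k => (hp k).2)
  have hRuv : Rf (ι uu) = ι vv := by
    have h1 : (eK p : ℕ → ℕ) = Rf (p : ℕ → ℕ) := rfl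
    rw [← huu, ← h1, hvv]
  have hconv : Tendsto (fun n => uu * z n) atTop (𝓝 vv) := by
    rw [Filter.tendsto_def]
    intro s hs
    obtain ⟨m, hm⟩ := coset_nhds hVb vv hs
    rw [mem_atTop_sets]
    refine ⟨RN m (cc V d m uu), fun n hn => ?_⟩
    apply hm
    have h1 : cc V d m (uu * z n) = cc V d m vv := by
      rw [I1 uu m n hn, hRuv]
    exact (cc_eq_iff hVo hd m _ vv).mp h1
  refine ⟨uu⁻¹ * vv, ?_⟩
  have h2 := hconv.const_mul uu⁻¹
  have h3 : (fun n => uu⁻¹ * (uu * z n)) = z := by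
    funext n
    group
  rw [h3] at h2
  exact h2

end Aux

section Part3
variable {G : Type*} [Group G] [TopologicalSpace G] [IsTopologicalGroup G]
variable {V : ℕ → Subgroup G} {d : ℕ → G}

lemma erel_symm {x y : ℕ → G} (h : ERel G x y) : ERel G y x := by
  obtain ⟨g, hg⟩ := h
  refine ⟨g⁻¹, ?_⟩
  have h2 := hg.inv
  have h3 : (fun n => (x n * (y n)⁻¹)⁻¹) = fun n => y n * (x n)⁻¹ := by
    funext n; group
  rwa [h3] at h2

lemma match_of_erel (hVo : ∀ m, IsOpen ((V m : Set G)))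
    (hVb : ∀ U ∈ 𝓝 (1 : G), ∃ m, ((V m : Set G)) ⊆ U)
    (hd : DenseRange d) {x y : ℕ → G} (h : ERel G x y) :
    ∀ m i, ∃ i' N, ∀ n ≥ N, cc V d m (d i * x n) = cc V d m (d i' * y n) := by
  obtain ⟨g, hg⟩ := h
  intro m i
  obtain ⟨m', hm'⟩ := conj_sub hVb m (d i) hVo
  have hopen : IsOpen ((fun h : G => h * (d i * g)⁻¹) ⁻¹' (V m : Set G)) :=
    (hVo m).preimage (continuous_id.mul continuous_const)
  have hne : ((fun h : G => h * (d i * g)⁻¹) ⁻¹' (V m : Set G)).Nonempty := by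
    refine ⟨d i * g, ?_⟩
    show (d i * g) * (d i * g)⁻¹ ∈ (V m : Set G)
    have h0 : (d i * g) * (d i * g)⁻¹ = (1 : G) := by group
    rw [h0]
    exact (V m).one_mem
  obtain ⟨i', hi'⟩ := hd.exists_mem_open hopen hne
  have hi'2 : d i' * (d i * g)⁻¹ ∈ V m := hi'
  have hgg : (1 : G) = g * g⁻¹ := by group
  have ht : Tendsto (fun n => (x n * (y n)⁻¹) * g⁻¹) atTop (𝓝 (g * g⁻¹)) :=
    hg.mul tendsto_const_nhds
  rw [← hgg] at ht
  have hev : ∀ᶠ n in atTop, (x n * (y n)⁻¹) * g⁻¹ ∈ (V m' : Set G) :=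
    ht.eventually_mem ((hVo m').mem_nhds (V m').one_mem)
  obtain ⟨N, hN⟩ := eventually_atTop.mp hev
  refine ⟨i', N, fun n hn => ?_⟩
  rw [cc_eq_iff hVo hd]
  have h2 := hm' _ (hN n hn)
  have hi'' : (d i * g) * (d i')⁻¹ ∈ V m := by
    have h3 := (V m).inv_mem hi'2
    simpa [mul_inv_rev] using h3
  have heq : (d i * x n) * (d i' * y n)⁻¹
      = (d i * ((x n * (y n)⁻¹) * g⁻¹) * (d i)⁻¹) * ((d i * g) * (d i')⁻¹) := by group
  rw [heq]
  exact (V m).mul_mem h2 hi''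

lemma erel_of_match [PolishSpace G] (hVo : ∀ m, IsOpen ((V m : Set G)))
    (hVb : ∀ U ∈ 𝓝 (1 : G), ∃ m, ((V m : Set G)) ⊆ U)
    (hd : DenseRange d) (hd0 : d 0 = 1) {x y : ℕ → G}
    (hxy : ∀ m, ∃ i' N, ∀ n ≥ N, cc V d m (d 0 * x n) = cc V d m (d i' * y n))
    (hyx : ∀ m, ∃ i' N, ∀ n ≥ N, cc V d m (d 0 * y n) = cc V d m (d i' * x n)) :
    ERel G x y := by
  apply raikov hVo hVb hd (fun n => x n * (y n)⁻¹)
  · intro m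
    obtain ⟨i', N, hN⟩ := hxy m
    refine ⟨N, fun n hn n' hn' => ?_⟩
    have h1 : (x n) * (d i' * y n)⁻¹ ∈ V m := by
      have := (cc_eq_iff hVo hd m _ _).mp (hN n hn)
      rw [hd0, one_mul] at this
      exact this
    have h2 : (x n') * (d i' * y n')⁻¹ ∈ V m := by
      have := (cc_eq_iff hVo hd m _ _).mp (hN n' hn')
      rw [hd0, one_mul] at this
      exact this
    have heq : (x n * (y n)⁻¹) * (x n' * (y n')⁻¹)⁻¹
        = ((x n) * (d i' * y n)⁻¹) * ((x n') * (d i' * y n')⁻¹)⁻¹ := by group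
    rw [heq]
    exact (V m).mul_mem h1 ((V m).inv_mem h2)
  · intro m
    obtain ⟨i', N, hN⟩ := hyx m
    refine ⟨N, fun n hn n' hn' => ?_⟩
    have h1 : (y n) * (d i' * x n)⁻¹ ∈ V m := by
      have := (cc_eq_iff hVo hd m _ _).mp (hN n hn)
      rw [hd0, one_mul] at this
      exact this
    have h2 : (y n') * (d i' * x n')⁻¹ ∈ V m := by
      have := (cc_eq_iff hVo hd m _ _).mp (hN n' hn')
      rw [hd0, one_mul] at this
      exact this
    have heq : (x n * (y n)⁻¹)⁻¹ * (x n' * (y n')⁻¹)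
        = ((y n) * (d i' * x n)⁻¹) * ((y n') * (d i' * x n')⁻¹)⁻¹ := by group
    rw [heq]
    exact (V m).mul_mem h1 ((V m).inv_mem h2)



/-- `k = 0` codes `m`, `k+1` codes the `k`-th value of `s` overridden by the list `l`. -/
def word (m : ℕ) (l : List ℕ) (s : ℕ → ℕ) : ℕ → ℕ :=
  fun k => Nat.casesOn k m (fun k' => l.getD k' (s k'))

noncomputable def theta (V : ℕ → Subgroup G) (d : ℕ → G) (x : ℕ → G) : ℕ → ℕ → ℕ :=
  fun p =>
    word ((Denumerable.eqv (ℕ × ℕ × List ℕ)).symm p).1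
      ((Denumerable.eqv (ℕ × ℕ × List ℕ)).symm p).2.2
      (fun n => cc V d ((Denumerable.eqv (ℕ × ℕ × List ℕ)).symm p).1
        (d ((Denumerable.eqv (ℕ × ℕ × List ℕ)).symm p).2.1 * x n))

lemma theta_apply (V : ℕ → Subgroup G) (d : ℕ → G) (x : ℕ → G) (m i : ℕ) (l : List ℕ) :
    theta V d x ((Denumerable.eqv (ℕ × ℕ × List ℕ)) (m, i, l))
      = word m l (fun n => cc V d m (d i * x n)) := by
  rw [theta, Equiv.symm_apply_apply]

lemma getD_range_map (f : ℕ → ℕ) (B k dflt : ℕ) :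
    ((List.range B).map f).getD k dflt = if k < B then f k else dflt := by
  rcases lt_or_ge k B with h | h
  · rw [if_pos h, List.getD_eq_getElem _ _ (by simpa using h)]
    simp
  · rw [if_neg (by omega), List.getD_eq_default _ _ (by simpa using h)]

lemma range_theta_subset (V : ℕ → Subgroup G) (d : ℕ → G) {x y : ℕ → G}
    (hm : ∀ m i, ∃ i' N, ∀ n ≥ N, cc V d m (d i * x n) = cc V d m (d i' * y n)) :
    Set.range (theta V d x) ⊆ Set.range (theta V d y) := by
  rintro f ⟨p, rfl⟩
  obtain ⟨⟨m, i, l⟩, hp⟩ : ∃ q, (Denumerable.eqv (ℕ × ℕ × List ℕ)).symm p = q := ⟨_, rfl⟩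
  have hp' : (Denumerable.eqv (ℕ × ℕ × List ℕ)) (m, i, l) = p := by
    rw [← hp, Equiv.apply_symm_apply]
  obtain ⟨i', N, hN⟩ := hm m i
  set B := max N l.length with hB
  set l' : List ℕ := (List.range B).map (fun k => l.getD k (cc V d m (d i * x k))) with hl'
  refine ⟨(Denumerable.eqv (ℕ × ℕ × List ℕ)) (m, i', l'), ?_⟩
  rw [theta_apply, ← hp', theta_apply]
  funext k
  cases k with
  | zero => rfl
  | succ k =>
    show l'.getD k (cc V d m (d i' * y k)) = l.getD k (cc V d m (d i * x k))
    rw [hl', getD_range_map]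
    rcases lt_or_ge k B with hk | hk
    · rw [if_pos hk]
    · rw [if_neg (by omega)]
      have h1 : l.getD k (cc V d m (d i * x k)) = cc V d m (d i * x k) :=
        List.getD_eq_default _ _ (by omega)
      rw [h1]
      exact (hN k (by omega)).symm

lemma eqplus_theta_iff (V : ℕ → Subgroup G) (d : ℕ → G) (x y : ℕ → G) :
    EqPlus (theta V d x) (theta V d y) ↔
      ((∀ m i, ∃ i' N, ∀ n ≥ N, cc V d m (d i * x n) = cc V d m (d i' * y n)) ∧
       (∀ m i, ∃ i' N, ∀ n ≥ N, cc V d m (d i * y n) = cc V d m (d i' * x n))) := by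
  constructor
  · intro h
    constructor
    · intro m i
      have hmem : theta V d x ((Denumerable.eqv (ℕ × ℕ × List ℕ)) (m, i, []))
          ∈ Set.range (theta V d y) := by
        rw [← h]
        exact ⟨_, rfl⟩
      obtain ⟨p', hp'⟩ := hmem
      obtain ⟨⟨m', i', l'⟩, hq⟩ : ∃ q, (Denumerable.eqv (ℕ × ℕ × List ℕ)).symm p' = q := ⟨_, rfl⟩
      have hq' : (Denumerable.eqv (ℕ × ℕ × List ℕ)) (m', i', l') = p' := by
        rw [← hq, Equiv.apply_symm_apply]
      rw [← hq', theta_apply, theta_apply] at hp'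
      have hm' : m' = m := by
        have := congrFun hp' 0
        exact this
      subst hm'
      refine ⟨i', l'.length, fun n hn => ?_⟩
      have h2 := congrFun hp' (n + 1)
      show cc V d m' (d i * x n) = cc V d m' (d i' * y n)
      have h3 : word m' l' (fun n => cc V d m' (d i' * y n)) (n+1)
          = cc V d m' (d i' * y n) := List.getD_eq_default _ _ (by omega)
      have h4 : word m' ([] : List ℕ) (fun n => cc V d m' (d i * x n)) (n+1)
          = cc V d m' (d i * x n) := List.getD_eq_default _ _ (by simp)
      rw [h3, h4] at h2
      exact h2.symm
    · intro m i
      have hmem : theta V d y ((Denumerable.eqv (ℕ × ℕ × List ℕ)) (m, i, []))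
          ∈ Set.range (theta V d x) := by
        rw [h]
        exact ⟨_, rfl⟩
      obtain ⟨p', hp'⟩ := hmem
      obtain ⟨⟨m', i', l'⟩, hq⟩ : ∃ q, (Denumerable.eqv (ℕ × ℕ × List ℕ)).symm p' = q := ⟨_, rfl⟩
      have hq' : (Denumerable.eqv (ℕ × ℕ × List ℕ)) (m', i', l') = p' := by
        rw [← hq, Equiv.apply_symm_apply]
      rw [← hq', theta_apply, theta_apply] at hp'
      have hm' : m' = m := by
        have := congrFun hp' 0
        exact this
      subst hm'
      refine ⟨i', l'.length, fun n hn => ?_⟩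
      have h2 := congrFun hp' (n + 1)
      show cc V d m' (d i * y n) = cc V d m' (d i' * x n)
      have h3 : word m' l' (fun n => cc V d m' (d i' * x n)) (n+1)
          = cc V d m' (d i' * x n) := List.getD_eq_default _ _ (by omega)
      have h4 : word m' ([] : List ℕ) (fun n => cc V d m' (d i * y n)) (n+1)
          = cc V d m' (d i * y n) := List.getD_eq_default _ _ (by simp)
      rw [h3, h4] at h2
      exact h2.symm
  · rintro ⟨h1, h2⟩
    exact le_antisymm (range_theta_subset V d h1) (range_theta_subset V d h2)

end Part3

section Meas
variable {G : Type*} [Group G] [TopologicalSpace G] [IsTopologicalGroup G] [PolishSpace G]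
variable {V : ℕ → Subgroup G} {d : ℕ → G}

lemma theta_measurable (hVo : ∀ m, IsOpen ((V m : Set G))) (hd : DenseRange d) :
    @Measurable (ℕ → G) (ℕ → ℕ → ℕ) (borel _) (borel _) (theta V d) := by
  letI : MeasurableSpace G := borel G
  haveI : BorelSpace G := ⟨rfl⟩
  have e1 : (inferInstance : MeasurableSpace (ℕ → G)) = borel (ℕ → G) :=
    BorelSpace.measurable_eq
  have e2 : (inferInstance : MeasurableSpace (ℕ → ℕ → ℕ)) = borel (ℕ → ℕ → ℕ) :=
    BorelSpace.measurable_eq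
  rw [← e1, ← e2]
  refine measurable_pi_lambda _ (fun p => measurable_pi_lambda _ (fun k => ?_))
  cases k with
  | zero => exact measurable_const
  | succ k =>
    show Measurable fun x : ℕ → G =>
      (((Denumerable.eqv (ℕ × ℕ × List ℕ)).symm p).2.2).getD k
        (cc V d ((Denumerable.eqv (ℕ × ℕ × List ℕ)).symm p).1
          (d ((Denumerable.eqv (ℕ × ℕ × List ℕ)).symm p).2.1 * x k))
    have hmeas : Measurable fun x : ℕ → G =>
        cc V d ((Denumerable.eqv (ℕ × ℕ × List ℕ)).symm p).1
          (d ((Denumerable.eqv (ℕ × ℕ × List ℕ)).symm p).2.1 * x k) := by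
      apply Continuous.measurable
      exact (cc_continuous hVo hd _).comp ((continuous_const.mul continuous_id).comp
        (continuous_apply k))
    exact (measurable_from_top
      (f := fun t : ℕ => (((Denumerable.eqv (ℕ × ℕ × List ℕ)).symm p).2.2).getD k t)).comp hmeas

end Meas

/-- For a non-archimedean Polish group `G`, `E(G) ≤_B =⁺`. -/
theorem stmt4 {G : Type*} [Group G] [TopologicalSpace G] [IsTopologicalGroup G] [PolishSpace G]
    (hna : NonArchGroup G) :
    BorelReducible (ERel G) EqPlus := by
  classical
  obtain ⟨u, hu⟩ := (𝓝 (1 : G)).exists_antitone_basis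
  have hmemU : ∀ m, u m ∈ 𝓝 (1 : G) := fun m => hu.toHasBasis.mem_of_mem trivial
  choose V hVo hVsub using fun m => hna (u m) (hmemU m)
  have hVb : ∀ U ∈ 𝓝 (1 : G), ∃ m, (V m : Set G) ⊆ U := by
    intro U hU
    obtain ⟨m, -, hm⟩ := hu.toHasBasis.mem_iff.mp hU
    exact ⟨m, (hVsub m).trans hm⟩
  haveI : Nonempty G := ⟨1⟩
  obtain ⟨d₀, hd₀⟩ := TopologicalSpace.exists_dense_seq G
  let d : ℕ → G := fun i => Nat.casesOn i 1 d₀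
  have hd : DenseRange d := by
    have hsub : Set.range d₀ ⊆ Set.range d := by
      rintro _ ⟨i, rfl⟩
      exact ⟨i + 1, rfl⟩
    exact Dense.mono hsub hd₀
  have hd0 : d 0 = 1 := rfl
  refine ⟨theta V d, theta_measurable hVo hd, ?_⟩
  intro x y
  rw [eqplus_theta_iff]
  constructor
  · intro h
    exact ⟨match_of_erel hVo hVb hd h, match_of_erel hVo hVb hd (erel_symm h)⟩
  · rintro ⟨h1, h2⟩
    exact erel_of_match hVo hVb hd hd0 (fun m => h1 m 0) (fun m => h2 m 0)
end

section
/- Let G be a Polish group acting continuously on a Polish space X, and let x, y ∈ X. If there exists a left Cauchy sequence (g_n) in G such that g_n·x → y, then there exists a right Cauchy sequence (h_n) in G such that h_n·y → x. (That is, left ι-embeddability of x into y implies right ι-embeddability of x into y.) -/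
open Filter Topology

/-- A sequence `(g n)` in a topological group is left Cauchy if
`(g m)⁻¹ * g n → 1` as `m, n → ∞`. -/
def LeftCauchy {G : Type*} [Group G] [TopologicalSpace G] (g : ℕ → G) : Prop :=
  Tendsto (fun p : ℕ × ℕ => (g p.1)⁻¹ * g p.2) atTop (𝓝 1)

/-- A sequence `(g n)` in a topological group is right Cauchy if
`g m * (g n)⁻¹ → 1` as `m, n → ∞`. -/
def RightCauchy {G : Type*} [Group G] [TopologicalSpace G] (g : ℕ → G) : Prop :=
  Tendsto (fun p : ℕ × ℕ => g p.1 * (g p.2)⁻¹) atTop (𝓝 1)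

/-- For a Polish group `G` acting continuously on a Polish space `X`,
left ι-embeddability of `x` into `y` implies right ι-embeddability of `x` into `y`. -/
theorem stmt6 {G X : Type*} [Group G] [TopologicalSpace G] [IsTopologicalGroup G] [PolishSpace G]
    [TopologicalSpace X] [PolishSpace X] [MulAction G X] [ContinuousSMul G X]
    (x y : X)
    (hl : ∃ g : ℕ → G, LeftCauchy g ∧ Tendsto (fun n => g n • x) atTop (𝓝 y)) :
    ∃ h : ℕ → G, RightCauchy h ∧ Tendsto (fun n => h n • y) atTop (𝓝 x) := by
  letI := TopologicalSpace.upgradeIsCompletelyMetrizable X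
  obtain ⟨g, hg, hgx⟩ := hl
  refine ⟨fun n => (g n)⁻¹, ?_, ?_⟩
  · simpa [RightCauchy, LeftCauchy] using hg
  · -- joint convergence: ((g m)⁻¹ * g n) • x → x
    have h1 : Tendsto (fun p : ℕ × ℕ => ((g p.1)⁻¹ * g p.2) • x) atTop (𝓝 x) := by
      simpa using hg.smul (tendsto_const_nhds : Tendsto (fun _ : ℕ × ℕ => x) atTop (𝓝 x))
    -- for fixed n, (g n)⁻¹ • y = lim_m ((g n)⁻¹ * g m) • x
    have h2 : ∀ n : ℕ, Tendsto (fun m => ((g n)⁻¹ * g m) • x) atTop (𝓝 ((g n)⁻¹ • y)) := by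
      intro n
      have := hgx.const_smul ((g n)⁻¹)
      simpa [mul_smul] using this
    rw [tendsto_def]
    intro s hs
    obtain ⟨t, htn, htc, hts⟩ := exists_mem_nhds_isClosed_subset hs
    have hev : ∀ᶠ p : ℕ × ℕ in atTop, ((g p.1)⁻¹ * g p.2) • x ∈ t :=
      h1.eventually (eventually_of_mem htn fun z hz => hz)
    rw [← prod_atTop_atTop_eq, eventually_prod_iff] at hev
    obtain ⟨pa, hpa, pb, hpb, hpab⟩ := hev
    obtain ⟨N1, hN1⟩ := eventually_atTop.mp hpa
    filter_upwards [eventually_ge_atTop N1] with n hn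
    have hmem : (fun n => (g n)⁻¹) n • y ∈ t := by
      refine htc.mem_of_tendsto (h2 n) ?_
      filter_upwards [hpb] with m hm
      exact hpab (hN1 n hn) hm
    exact hts hmem
end

section
/- Let G be a Polish group and let d be a compatible two-sided invariant metric on G. Let x, y ∈ G^ω, and suppose there exist sequences (γ_m) and (η_m) of elements of c(G) such that sup_{n∈ℕ} d(γ_m(n)·x(n)·y(n)⁻¹·η_m(n), 1_G) → 0 as m → ∞. Then x E(G) y, i.e., the sequence n ↦ x(n)·y(n)⁻¹ converges in G. (Consequently no TSI Polish group is unbalanced.) -/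
open Filter Topology

section Helpers
open Set

/-- Preimage of a Gδ set under a continuous map is Gδ. -/
lemma my_isGδ_preimage {X Y : Type*} [TopologicalSpace X] [TopologicalSpace Y]
    {f : X → Y} (hf : Continuous f) {s : Set Y} (hs : IsGδ s) : IsGδ (f ⁻¹' s) := by
  obtain ⟨T, hTo, hTc, rfl⟩ := hs
  rw [Set.preimage_sInter]
  exact IsGδ.biInter hTc fun t ht => ((hTo t ht).preimage hf).isGδ

/-- A dense completely metrizable (Polish) subspace of a metric space is Gδ. -/
lemma my_isGδ_range {α X : Type*} [TopologicalSpace α] [PolishSpace α] [MetricSpace X]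
    {f : α → X} (hf : IsEmbedding f) (hd : Dense (Set.range f)) : IsGδ (Set.range f) := by
  letI := TopologicalSpace.upgradeIsCompletelyMetrizable α
  set U : ℕ → Set X := fun n =>
    ⋃₀ {V : Set X | IsOpen V ∧ ∀ a b : α, f a ∈ V → f b ∈ V → dist a b < 1 / (n + 1)} with hU
  have hUopen : ∀ n, IsOpen (U n) := fun n => isOpen_sUnion fun V hV => hV.1
  have heq : Set.range f = ⋂ n, U n := by
    apply Set.Subset.antisymm
    · rintro x ⟨a, rfl⟩
      refine Set.mem_iInter.2 fun n => ?_
      have hpos : (0:ℝ) < 1 / (n + 1) / 2 := by positivity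
      obtain ⟨V, hVo, hVpre⟩ := (hf.toIsInducing.isOpen_iff).1
        (Metric.isOpen_ball (x := a) (ε := 1 / (n + 1) / 2))
      refine Set.mem_sUnion.2 ⟨V, ⟨hVo, fun a' b' ha' hb' => ?_⟩, ?_⟩
      · have ha2 : a' ∈ Metric.ball a (1 / (n + 1) / 2) := by rw [← hVpre]; exact ha'
        have hb2 : b' ∈ Metric.ball a (1 / (n + 1) / 2) := by rw [← hVpre]; exact hb'
        calc dist a' b' ≤ dist a' a + dist a b' := dist_triangle _ _ _
          _ < 1 / (n + 1) / 2 + 1 / (n + 1) / 2 := by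
              rw [Metric.mem_ball] at ha2 hb2
              exact add_lt_add ha2 (by rwa [dist_comm])
          _ = 1 / (n + 1) := by ring
      · have : a ∈ f ⁻¹' V := by rw [hVpre]; exact Metric.mem_ball_self hpos
        exact this
    · intro x hx
      have hx' := fun n => Set.mem_iInter.1 hx n
      simp only [hU, Set.mem_sUnion, Set.mem_setOf_eq] at hx'
      choose V hV hxV using hx'
      have hWa : ∀ n, ∃ a : α, (∀ k ≤ n, f a ∈ V k) ∧ f a ∈ Metric.ball x (1 / (n + 1)) := by
        intro n
        have hWo : IsOpen ((⋂ k ∈ Finset.range (n + 1), V k) ∩ Metric.ball x (1 / (n + 1))) :=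
          (isOpen_biInter_finset fun k _ => (hV k).1).inter Metric.isOpen_ball
        have hxW : x ∈ (⋂ k ∈ Finset.range (n + 1), V k) ∩ Metric.ball x (1 / (n + 1)) :=
          ⟨Set.mem_iInter₂.2 fun k _ => hxV k, Metric.mem_ball_self (by positivity)⟩
        obtain ⟨y, hy1, hy2⟩ := hd.exists_mem_open hWo ⟨x, hxW⟩
        obtain ⟨a, rfl⟩ := hy1
        exact ⟨a, fun k hk => Set.mem_iInter₂.1 hy2.1 k
          (Finset.mem_range.2 (Nat.lt_succ_of_le hk)), hy2.2⟩
      choose a ha1 ha2 using hWa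
      have hcauchy : CauchySeq a := by
        refine Metric.cauchySeq_iff'.2 fun ε hε => ?_
        obtain ⟨N, hN⟩ := exists_nat_one_div_lt hε
        refine ⟨N, fun n hn => ?_⟩
        have := (hV N).2 (a n) (a N) (ha1 n N hn) (ha1 N N le_rfl)
        calc dist (a n) (a N) < 1 / (N + 1) := this
          _ < ε := by exact_mod_cast hN
      obtain ⟨b, hb⟩ := cauchySeq_tendsto_of_complete hcauchy
      have h1 : Filter.Tendsto (fun n => f (a n)) atTop (𝓝 (f b)) :=
        (hf.continuous.tendsto b).comp hb
      have h2 : Filter.Tendsto (fun n => f (a n)) atTop (𝓝 x) := by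
        rw [tendsto_iff_dist_tendsto_zero]
        refine squeeze_zero (fun n => dist_nonneg) (fun n => le_of_lt ?_)
          tendsto_one_div_add_atTop_nhds_zero_nat
        exact Metric.mem_ball.1 (ha2 n)
      exact ⟨b, tendsto_nhds_unique h1 h2⟩
  rw [heq]
  exact IsGδ.iInter_of_isOpen hUopen

/-- A Polish additive group whose metric makes subtraction uniformly continuous is
complete (as a metric space): every Cauchy sequence converges. -/
lemma my_complete_aux {A : Type*} [AddGroup A] [MetricSpace A] [PolishSpace A]
    (hsub : UniformContinuous fun p : A × A => p.1 - p.2)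
    (u : ℕ → A) (hu : CauchySeq u) : ∃ g : A, Filter.Tendsto u atTop (𝓝 g) := by
  haveI : IsUniformAddGroup A := ⟨hsub⟩
  set H := UniformSpace.Completion A with hH
  have hiso : Isometry ((↑) : A → H) := UniformSpace.Completion.coe_isometry
  have hemb : IsEmbedding ((↑) : A → H) := hiso.isEmbedding
  have hdense : Dense (Set.range ((↑) : A → H)) := UniformSpace.Completion.denseRange_coe
  have hGδ : IsGδ (Set.range ((↑) : A → H)) := my_isGδ_range hemb hdense
  have hres : Set.range ((↑) : A → H) ∈ residual H := residual_of_dense_Gδ hGδ hdense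
  have hsurj : ∀ ξ : H, ∃ a : A, (a : H) = ξ := by
    intro ξ
    have hc : Continuous fun h : H => ξ + h := continuous_add_left ξ
    have hT : ((fun h : H => ξ + h) ⁻¹' Set.range ((↑) : A → H)) ∈ residual H := by
      refine residual_of_dense_Gδ (my_isGδ_preimage hc hGδ) ?_
      have := hdense.preimage (f := fun h : H => ξ + h) ?_
      · exact this
      · exact (Homeomorph.addLeft ξ).isOpenMap
    have hdense2 := dense_of_mem_residual (Filter.inter_mem hres hT)
    obtain ⟨h, ⟨a, ha⟩, ⟨b, hb⟩⟩ := hdense2.nonempty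
    exact ⟨b - a, by rw [UniformSpace.Completion.coe_sub, ha, hb]; exact add_sub_cancel_right ξ h⟩
  have hcu : CauchySeq fun n => ((u n : H)) := hu.map hiso.uniformContinuous
  obtain ⟨ξ, hξ⟩ := cauchySeq_tendsto_of_complete hcu
  obtain ⟨g, rfl⟩ := hsurj ξ
  refine ⟨g, ?_⟩
  rw [tendsto_iff_dist_tendsto_zero]
  have := (tendsto_iff_dist_tendsto_zero.1 hξ)
  simpa only [hiso.dist_eq] using this

lemma my_complete {G : Type*} [Group G] [MetricSpace G] [PolishSpace G]
    (hlinv : ∀ g h k : G, dist (g * h) (g * k) = dist h k)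
    (hrinv : ∀ g h k : G, dist (h * g) (k * g) = dist h k)
    (u : ℕ → G) (hu : CauchySeq u) : ∃ g : G, Filter.Tendsto u atTop (𝓝 g) := by
  have hdist_inv : ∀ a b : G, dist a⁻¹ b⁻¹ = dist b a := by
    intro a b
    calc dist a⁻¹ b⁻¹ = dist (a * a⁻¹) (a * b⁻¹) := (hlinv a a⁻¹ b⁻¹).symm
      _ = dist 1 (a * b⁻¹) := by rw [mul_inv_cancel]
      _ = dist (1 * b) (a * b⁻¹ * b) := (hrinv b 1 (a * b⁻¹)).symm
      _ = dist b a := by rw [one_mul, inv_mul_cancel_right]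
  have hdiv : ∀ a b c d : G, dist (a / b) (c / d) ≤ dist a c + dist d b := by
    intro a b c d
    simp only [div_eq_mul_inv]
    calc dist (a * b⁻¹) (c * d⁻¹)
        ≤ dist (a * b⁻¹) (c * b⁻¹) + dist (c * b⁻¹) (c * d⁻¹) := dist_triangle _ _ _
      _ = dist a c + dist d b := by rw [hrinv, hlinv, hdist_inv]
  letI : MetricSpace (Additive G) := ‹MetricSpace G›
  letI : PolishSpace (Additive G) := ‹PolishSpace G›
  have hsub : UniformContinuous fun p : Additive G × Additive G => p.1 - p.2 := by
    rw [Metric.uniformContinuous_iff]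
    intro ε hε
    refine ⟨ε / 2, by positivity, fun {p q} hpq => ?_⟩
    have h1 : dist p.1 q.1 ≤ dist p q := by rw [Prod.dist_eq]; exact le_max_left _ _
    have h2 : dist q.2 p.2 ≤ dist p q := by
      rw [dist_comm q.2 p.2, Prod.dist_eq]; exact le_max_right _ _
    calc dist (p.1 - p.2) (q.1 - q.2)
        ≤ dist p.1 q.1 + dist q.2 p.2 :=
          hdiv (Additive.toMul p.1) (Additive.toMul p.2) (Additive.toMul q.1)
            (Additive.toMul q.2)
      _ ≤ dist p q + dist p q := add_le_add h1 h2
      _ < ε := by linarith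
  exact my_complete_aux (A := Additive G) hsub u hu

end Helpers

/-- Let `G` be a Polish group with a compatible two-sided invariant metric, and let
`x, y ∈ G^ω`. If there are sequences `(γ m)`, `(η m)` of convergent sequences in `G`
such that `γ m * (x * y⁻¹) * η m` converges to `1` uniformly as `m → ∞`, then
`x E(G) y`. (Hence no TSI Polish group is unbalanced.) -/
theorem stmt10 {G : Type*} [Group G] [ts : TopologicalSpace G] [IsTopologicalGroup G]
    [PolishSpace G]
    (m : MetricSpace G) (hcompat : m.toUniformSpace.toTopologicalSpace = ts)
    (hlinv : ∀ g h k : G, m.dist (g * h) (g * k) = m.dist h k)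
    (hrinv : ∀ g h k : G, m.dist (h * g) (k * g) = m.dist h k)
    (x y : ℕ → G) (γ η : ℕ → ℕ → G)
    (hγ : ∀ i, ∃ g : G, Tendsto (γ i) atTop (𝓝 g))
    (hη : ∀ i, ∃ g : G, Tendsto (η i) atTop (𝓝 g))
    (hunif : ∀ ε > (0 : ℝ), ∀ᶠ i in atTop, ∀ n,
      m.dist (γ i n * x n * (y n)⁻¹ * η i n) 1 < ε) :
    ERel G x y := by
  subst hcompat
  letI := m
  classical
  choose gl hgl using hγ
  choose hl hhl using hη
  have hkey0 : ∀ (a b c : G), dist b (a⁻¹ * c⁻¹) = dist (a * b * c) 1 := by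
    intro a b c
    calc dist b (a⁻¹ * c⁻¹) = dist (a * b) (a * (a⁻¹ * c⁻¹)) := (hlinv a b _).symm
      _ = dist (a * b) c⁻¹ := by rw [mul_inv_cancel_left]
      _ = dist (a * b * c) (c⁻¹ * c) := (hrinv c _ _).symm
      _ = dist (a * b * c) 1 := by rw [inv_mul_cancel]
  have hφ : ∀ k : ℕ, ∃ i, ∀ n, dist (γ i n * x n * (y n)⁻¹ * η i n) 1 < 1 / (k + 1) := by
    intro k
    exact (hunif (1 / (k + 1)) (by positivity)).exists
  choose φ hφ' using hφ
  set w : ℕ → G := fun n => x n * (y n)⁻¹ with hw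
  set v : ℕ → ℕ → G := fun k n => (γ (φ k) n)⁻¹ * (η (φ k) n)⁻¹ with hv
  set c : ℕ → G := fun k => (gl (φ k))⁻¹ * (hl (φ k))⁻¹ with hc
  have hvc : ∀ k, Filter.Tendsto (v k) atTop (𝓝 (c k)) := fun k =>
    ((hgl (φ k)).inv).mul ((hhl (φ k)).inv)
  have hkey : ∀ k n, dist (w n) (v k n) < 1 / (k + 1) := by
    intro k n
    have := hkey0 (γ (φ k) n) (w n) (η (φ k) n)
    rw [this]
    have harr : γ (φ k) n * w n * η (φ k) n = γ (φ k) n * x n * (y n)⁻¹ * η (φ k) n := by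
      rw [hw]; group
    rw [harr]
    exact hφ' k n
  have hcc : ∀ k l, dist (c k) (c l) ≤ 1 / (k + 1) + 1 / (l + 1) := by
    intro k l
    have ht : Filter.Tendsto (fun n => dist (v k n) (v l n)) atTop
        (𝓝 (dist (c k) (c l))) := (hvc k).dist (hvc l)
    refine le_of_tendsto ht (Filter.Eventually.of_forall fun n => ?_)
    calc dist (v k n) (v l n) ≤ dist (v k n) (w n) + dist (w n) (v l n) := dist_triangle _ _ _
      _ ≤ 1 / (k + 1) + 1 / (l + 1) :=
        add_le_add (by rw [dist_comm]; exact (hkey k n).le) (hkey l n).le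
  have hmono : ∀ {N k : ℕ}, N ≤ k → (1 : ℝ) / (k + 1) ≤ 1 / (N + 1) := by
    intro N k hNk
    apply one_div_le_one_div_of_le (by positivity)
    have : (N : ℝ) ≤ k := Nat.cast_le.2 hNk
    linarith
  have hcauchy : CauchySeq c := by
    rw [Metric.cauchySeq_iff]
    intro ε hε
    obtain ⟨N, hN⟩ := exists_nat_one_div_lt (half_pos hε)
    refine ⟨N, fun k hk l hl' => ?_⟩
    calc dist (c k) (c l) ≤ 1 / (k + 1) + 1 / (l + 1) := hcc k l
      _ ≤ 1 / (N + 1) + 1 / (N + 1) := add_le_add (hmono hk) (hmono hl')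
      _ < ε / 2 + ε / 2 := by
          have : (1 : ℝ) / (N + 1) < ε / 2 := by exact_mod_cast hN
          linarith
      _ = ε := by ring
  obtain ⟨cl, hcl⟩ := my_complete hlinv hrinv c hcauchy
  refine ⟨cl, ?_⟩
  rw [Metric.tendsto_atTop]
  intro ε hε
  obtain ⟨K0, hK0⟩ := exists_nat_one_div_lt (show (0 : ℝ) < ε / 3 by linarith)
  obtain ⟨K1, hK1⟩ := Metric.tendsto_atTop.1 hcl (ε / 3) (by linarith)
  set k := max K0 K1 with hkdef
  have hk1 : (1 : ℝ) / (k + 1) < ε / 3 := by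
    refine lt_of_le_of_lt (hmono (le_max_left K0 K1)) ?_
    exact_mod_cast hK0
  have hk2 : dist (c k) cl < ε / 3 := hK1 k (le_max_right _ _)
  obtain ⟨N, hN⟩ := Metric.tendsto_atTop.1 (hvc k) (ε / 3) (by linarith)
  refine ⟨N, fun n hn => ?_⟩
  calc dist (w n) cl ≤ dist (w n) (v k n) + dist (v k n) (c k) + dist (c k) cl :=
        dist_triangle4 _ _ _ _
    _ < ε / 3 + ε / 3 + ε / 3 :=
        add_lt_add (add_lt_add (lt_trans (hkey k n) hk1) (hN n hn)) hk2
    _ = ε := by ring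
end

section
/- Let G be a Polish group that is not distal, and let d be any compatible metric on G. Then G is unbalanced: there exist z ∈ G^ω with z ∉ c(G) and sequences (γ_m), (η_m) of elements of c(G) such that sup_{n∈ℕ} d(γ_m(n)·z(n)·η_m(n), 1_G) → 0 as m → ∞. -/
open Filter Topology

/-- A topological group is distal if, for every `h ≠ 1`, the identity does not lie in
the closure of the conjugacy class of `h`. -/
def Distal (G : Type*) [Group G] [TopologicalSpace G] : Prop :=
  ∀ h : G, h ≠ 1 → (1 : G) ∉ closure {x : G | ∃ g : G, x = g * h * g⁻¹}

lemma auxclose {G : Type*} (m : MetricSpace G) (S : Set G) (a : G)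
    (hcl : a ∈ @closure G m.toUniformSpace.toTopologicalSpace S) :
    ∀ ε > (0:ℝ), ∃ x ∈ S, m.dist a x < ε := by
  letI := m
  exact fun ε hε => Metric.mem_closure_iff.mp hcl ε hε

/-- If a Polish group `G` is not distal, then `G` is unbalanced: for any compatible
metric on `G`, there are `z ∈ G^ω \ c(G)` and sequences `(γ m)`, `(η m)` of convergent
sequences in `G` with `γ m * z * η m` converging to `1` uniformly as `m → ∞`. -/
theorem stmt11 {G : Type*} [Group G] [ts : TopologicalSpace G] [IsTopologicalGroup G]
    [PolishSpace G]
    (hG : ¬ Distal G)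
    (m : MetricSpace G) (hcompat : m.toUniformSpace.toTopologicalSpace = ts) :
    ∃ z : ℕ → G, (¬ ∃ g : G, Tendsto z atTop (𝓝 g)) ∧
      ∃ γ η : ℕ → ℕ → G,
        (∀ i, ∃ g : G, Tendsto (γ i) atTop (𝓝 g)) ∧
        (∀ i, ∃ g : G, Tendsto (η i) atTop (𝓝 g)) ∧
        ∀ ε > (0 : ℝ), ∀ᶠ i in atTop, ∀ n, m.dist (γ i n * z n * η i n) 1 < ε := by
  rw [Distal] at hG
  push_neg at hG
  obtain ⟨h, hne, hcl⟩ := hG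
  rw [← hcompat] at hcl
  have key : ∀ k : ℕ, ∃ g : G, m.dist (g * h * g⁻¹) 1 < 1/(k+1) := by
    intro k
    obtain ⟨x, ⟨g, rfl⟩, hx⟩ := auxclose m _ _ hcl (1/(k+1)) (by positivity)
    refine ⟨g, ?_⟩
    rwa [@dist_comm G m.toPseudoMetricSpace (1:G) (g*h*g⁻¹)] at hx
  choose g hg using key
  refine ⟨fun n => if Even n then 1 else h, ?_, fun i _ => g i, fun i _ => (g i)⁻¹,
    fun i => ⟨g i, tendsto_const_nhds⟩, fun i => ⟨(g i)⁻¹, tendsto_const_nhds⟩, ?_⟩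
  · rintro ⟨a, ha⟩
    have m1 : Monotone (fun k : ℕ => 2*k) := fun x y hxy => by dsimp; omega
    have m2 : Monotone (fun k : ℕ => 2*k+1) := fun x y hxy => by dsimp; omega
    have h1 : Tendsto (fun k : ℕ => if Even (2*k) then (1:G) else h) atTop (𝓝 a) :=
      ha.comp (tendsto_atTop_atTop_of_monotone m1 (fun b => ⟨b, by omega⟩))
    have h2 : Tendsto (fun k : ℕ => if Even (2*k+1) then (1:G) else h) atTop (𝓝 a) :=
      ha.comp (tendsto_atTop_atTop_of_monotone m2 (fun b => ⟨b, by omega⟩))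
    simp only [even_two_mul, if_pos, Nat.even_add_one, Nat.not_even_iff_odd,
      Even.mul_right, even_two, if_true, Nat.not_even_two_mul_add_one, if_false] at h1 h2
    have e1 : a = 1 := tendsto_nhds_unique h1 tendsto_const_nhds
    have e2 : a = h := tendsto_nhds_unique h2 tendsto_const_nhds
    exact hne (e2 ▸ e1)
  · intro ε hε
    have hten : Tendsto (fun k : ℕ => 1/((k:ℝ)+1)) atTop (𝓝 0) :=
      tendsto_one_div_add_atTop_nhds_zero_nat
    filter_upwards [hten.eventually (gt_mem_nhds hε)] with i hi n
    by_cases hn : Even n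
    · simp only [hn, if_pos]
      have h0 : g i * 1 * (g i)⁻¹ = 1 := by group
      rw [h0, @dist_self G m.toPseudoMetricSpace (1:G)]
      exact hε
    · simp only [hn, if_false]
      exact (hg i).trans hi
end

section
/- Let G be a locally compact Polish group and let d be a compatible metric on G. Suppose there exist x, y ∈ G^ω with x·y⁻¹ ∉ c(G) (pointwise operations) and sequences (γ_m), (η_m) of elements of c(G) such that sup_{n∈ℕ} d(γ_m(n)·x(n)·y(n)⁻¹·η_m(n), 1_G) → 0 as m → ∞. Then G is not distal, i.e., there exists h ≠ 1_G whose conjugacy class {g·h·g⁻¹ : g ∈ G} has 1_G in its closure. (Hence a locally compact Polish group is unbalanced if and only if it is not distal.) -/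
open Filter Topology

open scoped Pointwise

/-- If a locally compact Polish group `G` is unbalanced — i.e. there are `x, y ∈ G^ω`
with `x * y⁻¹ ∉ c(G)` and sequences `(γ m)`, `(η m)` of convergent sequences in `G`
such that `γ m * (x * y⁻¹) * η m` converges to `1` uniformly (w.r.t. a compatible
metric) — then `G` is not distal. -/
theorem stmt12 {G : Type*} [Group G] [ts : TopologicalSpace G] [IsTopologicalGroup G]
    [PolishSpace G] [LocallyCompactSpace G]
    (m : MetricSpace G) (hcompat : m.toUniformSpace.toTopologicalSpace = ts)
    (x y : ℕ → G)
    (hxy : ¬ ∃ g : G, Tendsto (fun n => x n * (y n)⁻¹) atTop (𝓝 g))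
    (γ η : ℕ → ℕ → G)
    (hγ : ∀ i, ∃ g : G, Tendsto (γ i) atTop (𝓝 g))
    (hη : ∀ i, ∃ g : G, Tendsto (η i) atTop (𝓝 g))
    (hunif : ∀ ε > (0 : ℝ), ∀ᶠ i in atTop, ∀ n,
      m.dist (γ i n * x n * (y n)⁻¹ * η i n) 1 < ε) :
    ∃ h : G, h ≠ 1 ∧ (1 : G) ∈ closure {w : G | ∃ g : G, w = g * h * g⁻¹} := by
  subst hcompat
  letI : MetricSpace G := m
  set z : ℕ → G := fun n => x n * (y n)⁻¹ with hz
  choose a ha using hγ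
  choose b hb using hη
  -- a compact set containing all values of z
  obtain ⟨K, hKc, hKmem⟩ := exists_compact_mem_nhds (1 : G)
  obtain ⟨ε₀, hε₀, hball⟩ := Metric.mem_nhds_iff.mp hKmem
  obtain ⟨i₀, hi₀⟩ := (hunif ε₀ hε₀).exists
  have hA : IsCompact (insert (a i₀) (Set.range (γ i₀))) := (ha i₀).isCompact_insert_range
  have hB : IsCompact (insert (b i₀) (Set.range (η i₀))) := (hb i₀).isCompact_insert_range
  set S := (insert (a i₀) (Set.range (γ i₀)))⁻¹ * K * (insert (b i₀) (Set.range (η i₀)))⁻¹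
    with hSdef
  have hS : IsCompact S := (hA.inv.mul hKc).mul hB.inv
  have hzS : ∀ n, z n ∈ S := by
    intro n
    have hmem : γ i₀ n * x n * (y n)⁻¹ * η i₀ n ∈ K :=
      hball (by simpa [Metric.mem_ball] using hi₀ n)
    have hrw : z n = ((γ i₀ n)⁻¹ * (γ i₀ n * x n * (y n)⁻¹ * η i₀ n)) * (η i₀ n)⁻¹ := by
      simp only [hz]; group
    rw [hrw]
    exact Set.mul_mem_mul
      (Set.mul_mem_mul (Set.inv_mem_inv.mpr (Set.mem_insert_iff.mpr (Or.inr ⟨n, rfl⟩))) hmem)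
      (Set.inv_mem_inv.mpr (Set.mem_insert_iff.mpr (Or.inr ⟨n, rfl⟩)))
  -- first subsequential limit c
  obtain ⟨c, -, φ, hφ, hzc⟩ := hS.tendsto_subseq hzS
  -- z does not converge to c, so find a subsequence bounded away from c
  have hnc : ¬ Tendsto z atTop (𝓝 c) := fun h => hxy ⟨c, h⟩
  rw [Metric.tendsto_atTop] at hnc
  push_neg at hnc
  obtain ⟨r, hr, hfr⟩ := hnc
  obtain ⟨ψ, hψ, hψr⟩ := Filter.extraction_of_frequently_atTop (Filter.frequently_atTop.mpr hfr)
  obtain ⟨c', -, χ, hχ, hzc'⟩ := hS.tendsto_subseq (fun k => hzS (ψ k))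
  -- c ≠ c'
  have hdcc : r ≤ dist c' c := by
    have hdl : Tendsto (fun k => dist ((z ∘ ψ ∘ χ) k) c) atTop (𝓝 (dist c' c)) :=
      hzc'.dist tendsto_const_nhds
    exact ge_of_tendsto' hdl fun k => hψr (χ k)
  have hne : c ≠ c' := by
    intro hcc
    rw [hcc, dist_self] at hdcc
    exact absurd hdcc (not_le.mpr hr)
  -- key limit lemma
  have key : ∀ (w : G) (θ : ℕ → ℕ), StrictMono θ → Tendsto (z ∘ θ) atTop (𝓝 w) →
      Tendsto (fun i => a i * w * b i) atTop (𝓝 1) := by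
    intro w θ hθ hw
    rw [Metric.tendsto_atTop]
    intro ε hε
    obtain ⟨N, hN⟩ := Filter.eventually_atTop.mp (hunif (ε / 2) (by positivity))
    refine ⟨N, fun i hi => ?_⟩
    have hlim : Tendsto (fun k => γ i (θ k) * z (θ k) * η i (θ k)) atTop
        (𝓝 (a i * w * b i)) :=
      (((ha i).comp hθ.tendsto_atTop).mul hw).mul ((hb i).comp hθ.tendsto_atTop)
    have hdl : Tendsto (fun k => dist (γ i (θ k) * z (θ k) * η i (θ k)) 1) atTop
        (𝓝 (dist (a i * w * b i) 1)) := hlim.dist tendsto_const_nhds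
    have hle : dist (a i * w * b i) 1 ≤ ε / 2 := by
      refine le_of_tendsto' hdl fun k => le_of_lt ?_
      have := hN i hi (θ k)
      simpa [hz, mul_assoc] using this
    calc dist (a i * w * b i) 1 ≤ ε / 2 := hle
      _ < ε := half_lt_self hε
  have h1 : Tendsto (fun i => a i * c * b i) atTop (𝓝 1) := key c φ hφ hzc
  have h2 : Tendsto (fun i => a i * c' * b i) atTop (𝓝 1) := key c' (ψ ∘ χ) (hψ.comp hχ) hzc'
  refine ⟨c * c'⁻¹, by simpa [mul_inv_eq_one] using hne, ?_⟩
  have hf : Tendsto (fun i => (a i * c * b i) * (a i * c' * b i)⁻¹) atTop (𝓝 1) := by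
    simpa using h1.mul h2.inv
  refine mem_closure_of_tendsto hf (Filter.Eventually.of_forall fun i => ?_)
  exact ⟨a i, by group⟩
end

section
/- Let G be a TSI Polish group. Then the product equivalence relation E(G) × E(G;0) on G^ω × G^ω is Borel reducible to E(G). -/
open Filter Topology

/-- `E(G;0)`: the relation on `G^ω` relating `x` and `y` iff `(x n)⁻¹ * y n → 1`. -/
def EZeroRel (G : Type*) [Group G] [TopologicalSpace G] (x y : ℕ → G) : Prop :=
  Tendsto (fun n => (x n)⁻¹ * y n) atTop (𝓝 (1 : G))

/-- A topological group is TSI if it admits a compatible two-sided invariant metric. -/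
def TSIGroup (G : Type*) [Group G] [t : TopologicalSpace G] : Prop :=
  ∃ m : MetricSpace G, m.toUniformSpace.toTopologicalSpace = t ∧
    (∀ g h k : G, m.dist (g * h) (g * k) = m.dist h k) ∧
    (∀ g h k : G, m.dist (h * g) (k * g) = m.dist h k)

/-- For a TSI Polish group `G`, the product relation `E(G) × E(G;0)` is Borel
reducible to `E(G)`. -/
theorem stmt14 {G : Type*} [Group G] [TopologicalSpace G] [IsTopologicalGroup G] [PolishSpace G]
    (htsi : TSIGroup G) :
    BorelReducible
      (fun p q : (ℕ → G) × (ℕ → G) => ERel G p.1 q.1 ∧ EZeroRel G p.2 q.2)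
      (ERel G) := by
  obtain ⟨m, hm, hl, hr⟩ := htsi
  subst hm
  letI : MetricSpace G := m
  have hl' : ∀ g h k : G, dist (g * h) (g * k) = dist h k := hl
  have hr' : ∀ g h k : G, dist (h * g) (k * g) = dist h k := hr
  have conj : ∀ a b c : G, dist (a * b * c) (a * c) = dist b 1 := by
    intro a b c
    rw [hr' c (a * b) a]
    have : dist (a * b) a = dist (a * b) (a * 1) := by rw [mul_one]
    rw [this, hl']
  have flip : ∀ a b : G, dist (a * b⁻¹) 1 = dist (a⁻¹ * b) 1 := by
    intro a b
    have h1 : dist (a * b⁻¹) 1 = dist b⁻¹ a⁻¹ := by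
      have := hl' a⁻¹ (a * b⁻¹) 1
      simp only [mul_one] at this
      rw [← this, ← mul_assoc, inv_mul_cancel, one_mul]
    have h2 : dist (a⁻¹ * b) 1 = dist a⁻¹ b⁻¹ := by
      have := hr' b⁻¹ (a⁻¹ * b) 1
      simp only [one_mul] at this
      rw [← this, mul_assoc, mul_inv_cancel, mul_one]
    rw [h1, h2, dist_comm]
  have hhalf : Tendsto (fun n : ℕ => n / 2) atTop atTop :=
    tendsto_atTop_atTop.2 fun b => ⟨2 * b, fun n hn => by omega⟩
  have t2 : Tendsto (fun k : ℕ => 2 * k) atTop atTop :=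
    tendsto_atTop_atTop.2 fun b => ⟨b, fun a ha => by omega⟩
  have t21 : Tendsto (fun k : ℕ => 2 * k + 1) atTop atTop :=
    tendsto_atTop_atTop.2 fun b => ⟨b, fun a ha => by omega⟩
  have hdiv1 : ∀ k : ℕ, (2 * k + 1) / 2 = k := fun k => by omega
  have hdiv0 : ∀ k : ℕ, (2 * k) / 2 = k := fun k => by omega
  have hmod0 : ∀ k : ℕ, (2 * k) % 2 = 0 := fun k => by omega
  have hmod1 : ∀ k : ℕ, (2 * k + 1) % 2 = 1 := fun k => by omega
  refine ⟨fun p n => if n % 2 = 0 then p.1 (n / 2) else p.1 (n / 2) * p.2 (n / 2), ?_, ?_⟩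
  · apply Continuous.borel_measurable
    apply continuous_pi
    intro n
    by_cases h : n % 2 = 0 <;> simp only [h, if_true, if_false]
    · exact (continuous_apply _).comp continuous_fst
    · exact ((continuous_apply _).comp continuous_fst).mul
        ((continuous_apply _).comp continuous_snd)
  · rintro ⟨x, z⟩ ⟨x', z'⟩
    constructor
    · rintro ⟨⟨g, hg⟩, hz⟩
      refine ⟨g, tendsto_iff_dist_tendsto_zero.2 ?_⟩
      have hg' := tendsto_iff_dist_tendsto_zero.1 hg
      have hz' := tendsto_iff_dist_tendsto_zero.1 hz
      refine squeeze_zero (fun n => dist_nonneg)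
        (g := fun n => dist ((z (n / 2))⁻¹ * z' (n / 2)) 1
              + dist (x (n / 2) * (x' (n / 2))⁻¹) g) ?_ ?_
      · intro n
        by_cases h : n % 2 = 0 <;> simp only [h, if_true, if_false]
        · exact le_add_of_nonneg_left dist_nonneg
        · set k := n / 2
          calc dist (x k * z k * (x' k * z' k)⁻¹) g
              ≤ dist (x k * z k * (x' k * z' k)⁻¹) (x k * (x' k)⁻¹)
                + dist (x k * (x' k)⁻¹) g := dist_triangle _ _ _
            _ = dist ((z k)⁻¹ * z' k) 1 + dist (x k * (x' k)⁻¹) g := by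
                have e : x k * z k * (x' k * z' k)⁻¹
                    = x k * (z k * (z' k)⁻¹) * (x' k)⁻¹ := by group
                rw [e, conj (x k) (z k * (z' k)⁻¹) (x' k)⁻¹, flip]
      · have := (hz'.comp hhalf).add (hg'.comp hhalf)
        simpa using this
    · rintro ⟨g, hg⟩
      have he : Tendsto (fun k => x k * (x' k)⁻¹) atTop (𝓝 g) := by
        have := hg.comp t2
        simpa [Function.comp_def, hmod0, hdiv0] using this
      have ho : Tendsto (fun k => x k * z k * (x' k * z' k)⁻¹) atTop (𝓝 g) := by
        have := hg.comp t21
        simpa [Function.comp_def, hmod1, hdiv1, mul_assoc] using this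
      refine ⟨⟨g, he⟩, ?_⟩
      have he' := tendsto_iff_dist_tendsto_zero.1 he
      have ho' := tendsto_iff_dist_tendsto_zero.1 ho
      refine tendsto_iff_dist_tendsto_zero.2 ?_
      refine squeeze_zero (fun n => dist_nonneg)
        (g := fun k => dist (x k * z k * (x' k * z' k)⁻¹) g
              + dist (x k * (x' k)⁻¹) g) ?_ ?_
      · intro k
        have e : x k * z k * (x' k * z' k)⁻¹
            = x k * (z k * (z' k)⁻¹) * (x' k)⁻¹ := by group
        calc dist ((z k)⁻¹ * z' k) 1
            = dist (x k * z k * (x' k * z' k)⁻¹) (x k * (x' k)⁻¹) := by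
              rw [e, conj (x k) (z k * (z' k)⁻¹) (x' k)⁻¹, flip]
          _ ≤ dist (x k * z k * (x' k * z' k)⁻¹) g + dist (x k * (x' k)⁻¹) g :=
              dist_triangle_right _ _ _
      · simpa using ho'.add he'
end
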